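/- Let s and t be integers with s ≥ 2 and 1 ≤ t ≤ s − 1. There exists a constant C depending only on s such that for every integer z ≥ 2, the sum over all t-tuples (x_1, …, x_t) of positive integers with x_1 + ⋯ + x_t < z of (x_1 ⋯ x_t)^{-1+1/s} · (z − (x_1 + ⋯ + x_t))^{-2t/s} is at most C · z^{-1/s} · log z. -/

import Mathlib

open Finset Real
set_option maxHeartbeats 1000000

-- key pointwise Bernoulli consequence
lemma bern_le {p : ℝ} (hp0 : 0 ≤ p) (hp1 : p ≤ 1) {N : ℝ} (hN : 1 ≤ N) :
    (N - 1) ^ p ≤ N ^ p - p * N ^ (p - 1) := by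
  have hN0 : 0 < N := lt_of_lt_of_le one_pos hN
  have h1 : (0:ℝ) ≤ 1 - 1 / N := by
    rw [sub_nonneg, div_le_one hN0]; exact hN
  have key : (1 - 1/N) ^ p ≤ 1 - p / N := by
    have := rpow_one_add_le_one_add_mul_self (s := -(1/N)) (by
      simp only [neg_le_neg_iff]; rw [div_le_one hN0]; exact hN) hp0 hp1
    simpa [sub_eq_add_neg, mul_neg, div_eq_mul_inv] using this
  have hfact : N - 1 = N * (1 - 1/N) := by field_simp
  rw [hfact, Real.mul_rpow hN0.le h1]
  have h2 : N ^ p * (1 - 1/N) ^ p ≤ N ^ p * (1 - p / N) :=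
    mul_le_mul_of_nonneg_left key (rpow_nonneg hN0.le p)
  refine h2.trans (le_of_eq ?_)
  rw [mul_sub, mul_one, Real.rpow_sub_one hN0.ne']
  ring

lemma bern_ge {q : ℝ} (hq0 : 0 < q) (hq1 : q ≤ 1) {N : ℝ} (hN : 2 ≤ N) :
    N ^ (-q) + q * N ^ (-q - 1) ≤ (N - 1) ^ (-q) := by
  have hN0 : 0 < N := lt_of_lt_of_le two_pos hN
  have hN1 : 0 < N - 1 := by linarith
  have hqN : q / N < 1 := by
    rw [div_lt_one hN0]; linarith
  have h1 : (N - 1) ^ q ≤ N ^ q * (1 - q / N) := by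
    have := bern_le hq0.le hq1 (N := N) (by linarith)
    have e : N ^ q - q * N ^ (q - 1) = N ^ q * (1 - q / N) := by
      rw [Real.rpow_sub_one hN0.ne']; ring
    linarith [this, e ▸ this]
  have h2 : (1 + q / N) ≤ (1 - q / N)⁻¹ := by
    have hpos : (0:ℝ) < 1 - q / N := by linarith
    rw [inv_eq_one_div, le_div_iff₀ hpos]
    nlinarith [sq_nonneg (q / N)]
  have hA : 0 < (N - 1) ^ q := rpow_pos_of_pos hN1 q
  have hB : 0 < N ^ q * (1 - q / N) := mul_pos (rpow_pos_of_pos hN0 q) (by linarith)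
  have h3 : (N ^ q * (1 - q / N))⁻¹ ≤ ((N - 1) ^ q)⁻¹ := by
    exact inv_anti₀ hA h1
  rw [← Real.rpow_neg hN1.le] at h3
  refine le_trans ?_ h3
  rw [mul_inv, ← Real.rpow_neg hN0.le]
  have : N ^ (-q) * (1 + q / N) ≤ N ^ (-q) * (1 - q/N)⁻¹ :=
    mul_le_mul_of_nonneg_left h2 (rpow_nonneg hN0.le _)
  refine le_trans (le_of_eq ?_) this
  rw [show -q - 1 = -q - 1 from rfl, Real.rpow_sub_one hN0.ne' (y := -q)]
  ring

lemma sumA {p : ℝ} (hp0 : 0 < p) (hp1 : p ≤ 1) (z : ℕ) :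
    ∑ x ∈ Finset.Icc 1 z, (x : ℝ) ^ (p - 1) ≤ (z : ℝ) ^ p / p := by
  induction z with
  | zero => simp [Real.zero_rpow hp0.ne']
  | succ n ih =>
    rw [Finset.sum_Icc_succ_top (by omega)]
    push_cast
    have hn0 : (0:ℝ) ≤ (n:ℝ) := Nat.cast_nonneg n
    have hN : (1:ℝ) ≤ (n:ℝ) + 1 := by linarith
    have key := bern_le hp0.le hp1 hN
    rw [show (n:ℝ) + 1 - 1 = (n:ℝ) by ring] at key
    rw [le_div_iff₀ hp0] at ih ⊢
    nlinarith [key]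

lemma sumTail {q : ℝ} (hq0 : 0 < q) (hq1 : q ≤ 1) (z : ℕ) :
    ∑ x ∈ Finset.Icc 1 z, (x : ℝ) ^ (-1 - q) ≤ 1 + 1 / q := by
  have main : ∀ m : ℕ, 1 ≤ m →
      ∑ x ∈ Finset.Icc 1 m, (x : ℝ) ^ (-1 - q) ≤ 1 + (1 - (m:ℝ) ^ (-q)) / q := by
    intro m hm
    induction m, hm using Nat.le_induction with
    | base => simp [Real.one_rpow]
    | succ n hn ih =>
      rw [Finset.sum_Icc_succ_top (by omega)]
      push_cast
      have hn2 : (2:ℝ) ≤ (n:ℝ) + 1 := by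
        have : (1:ℝ) ≤ (n:ℝ) := by exact_mod_cast hn
        linarith
      have key := bern_ge hq0 hq1 hn2
      rw [show (n:ℝ) + 1 - 1 = (n:ℝ) by ring,
        show -q - 1 = -1 - q by ring] at key
      have hstep : ((n:ℝ)+1) ^ (-1 - q) ≤ ((n:ℝ) ^ (-q) - ((n:ℝ)+1) ^ (-q)) / q := by
        rw [le_div_iff₀ hq0]
        nlinarith [key]
      calc (∑ x ∈ Finset.Icc 1 n, (x:ℝ) ^ (-1-q)) + ((n:ℝ)+1) ^ (-1-q)
          ≤ (1 + (1 - (n:ℝ) ^ (-q)) / q) + ((n:ℝ) ^ (-q) - ((n:ℝ)+1) ^ (-q)) / q :=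
            add_le_add ih hstep
        _ = 1 + (1 - ((n:ℝ)+1) ^ (-q)) / q := by ring
  rcases Nat.eq_zero_or_pos z with rfl | hz
  · simp; positivity
  refine (main z hz).trans ?_
  have h1 : 0 ≤ ((z:ℝ)) ^ (-q) := Real.rpow_nonneg (Nat.cast_nonneg z) _
  have : (1 - (z:ℝ) ^ (-q)) / q ≤ 1 / q := by
    gcongr
    linarith
  linarith

lemma sumHarm (z : ℕ) : ∑ x ∈ Finset.Icc 1 z, (x : ℝ) ^ (-1 : ℝ) ≤ 1 + Real.log z := by
  have e : ∑ x ∈ Finset.Icc 1 z, (x : ℝ) ^ (-1 : ℝ) = (harmonic z : ℝ) := by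
    rw [harmonic]
    push_cast
    refine Finset.sum_nbij' (fun x => x - 1) (fun i => i + 1) ?_ ?_ ?_ ?_ ?_
    · intro a ha; simp only [Finset.mem_Icc] at ha; simp only [Finset.mem_range]; omega
    · intro a ha; simp only [Finset.mem_range] at ha; simp only [Finset.mem_Icc]; omega
    · intro a ha; simp only [Finset.mem_Icc] at ha; omega
    · intro a _; omega
    · intro a ha
      simp only [Finset.mem_Icc] at ha
      rw [Real.rpow_neg_one]
      have : ((a - 1 : ℕ) : ℝ) + 1 = (a : ℝ) := by
        have : a - 1 + 1 = a := by omega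
        exact_mod_cast congrArg (Nat.cast : ℕ → ℝ) this
      rw [this]
  rw [e]
  exact_mod_cast harmonic_le_one_add_log z

lemma sumB {s t : ℕ} (hs : 2 ≤ s) (ht : 1 ≤ t) (hts : t ≤ s - 1) {z : ℕ} (hz : 2 ≤ z) :
    ∃ b : ℝ, 0 ≤ b ∧
      (∑ y ∈ Finset.Icc 1 z, (y:ℝ) ^ (-(2*(t:ℝ))/s)) ≤ ((s:ℝ)+1) * (1 + Real.log z) * (z:ℝ) ^ b ∧
      (-1 + 1/(s:ℝ)) + ((t:ℝ)-1)/s + b ≤ -1/(s:ℝ) := by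
  have hs0 : (0:ℝ) < s := by positivity
  have ht1 : (1:ℝ) ≤ (t:ℝ) := by exact_mod_cast ht
  have hlog : 0 ≤ Real.log z := Real.log_nonneg (by exact_mod_cast Nat.one_le_of_lt hz)
  have hts' : (t:ℝ) ≤ (s:ℝ) - 1 := by
    have h := (Nat.cast_le (α := ℝ)).2 hts
    rwa [Nat.cast_sub (by omega), Nat.cast_one] at h
  rcases le_or_gt (2 * t) s with h2t | h2t
  · -- 2t ≤ s : b = 1 - 2t/s
    refine ⟨1 - 2*(t:ℝ)/s, ?_, ?_, ?_⟩
    · have : 2 * (t:ℝ) ≤ s := by exact_mod_cast h2t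
      have := div_le_one_of_le₀ this hs0.le
      linarith
    · have hstep : ∀ y ∈ Finset.Icc 1 z, (y:ℝ) ^ (-(2*(t:ℝ))/s) ≤
          (y:ℝ) ^ (-1:ℝ) * (z:ℝ) ^ (1 - 2*(t:ℝ)/s) := by
        intro y hy
        simp only [Finset.mem_Icc] at hy
        have hy0 : (0:ℝ) < y := by exact_mod_cast hy.1
        have hyz : (y:ℝ) ≤ z := by exact_mod_cast hy.2
        have e : -(2*(t:ℝ))/s = (-1 : ℝ) + (1 - 2*(t:ℝ)/s) := by ring
        rw [e, Real.rpow_add hy0]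
        have hb : (0:ℝ) ≤ 1 - 2*(t:ℝ)/s := by
          have h2 : 2 * (t:ℝ) ≤ s := by exact_mod_cast h2t
          have := div_le_one_of_le₀ h2 hs0.le
          linarith
        exact mul_le_mul_of_nonneg_left
          (Real.rpow_le_rpow hy0.le hyz hb) (Real.rpow_nonneg hy0.le _)
      calc ∑ y ∈ Finset.Icc 1 z, (y:ℝ) ^ (-(2*(t:ℝ))/s)
          ≤ ∑ y ∈ Finset.Icc 1 z, (y:ℝ) ^ (-1:ℝ) * (z:ℝ) ^ (1 - 2*(t:ℝ)/s) :=
            Finset.sum_le_sum hstep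
        _ = (∑ y ∈ Finset.Icc 1 z, (y:ℝ) ^ (-1:ℝ)) * (z:ℝ) ^ (1 - 2*(t:ℝ)/s) := by
            rw [← Finset.sum_mul]
        _ ≤ (1 + Real.log z) * (z:ℝ) ^ (1 - 2*(t:ℝ)/s) :=
            mul_le_mul_of_nonneg_right (sumHarm z)
              (Real.rpow_nonneg (Nat.cast_nonneg z) _)
        _ ≤ ((s:ℝ)+1) * ((1 + Real.log z) * (z:ℝ) ^ (1 - 2*(t:ℝ)/s)) :=
            le_mul_of_one_le_left
              (mul_nonneg (by linarith) (Real.rpow_nonneg (Nat.cast_nonneg z) _))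
              (by linarith)
        _ = ((s:ℝ)+1) * (1 + Real.log z) * (z:ℝ) ^ (1 - 2*(t:ℝ)/s) :=
            (mul_assoc _ _ _).symm
    · have e1 : -1 + 1/(s:ℝ) + ((t:ℝ)-1)/s + (1 - 2*(t:ℝ)/s) = -(t:ℝ)/s := by
        field_simp; ring
      rw [e1, div_le_div_iff₀ hs0 hs0]
      nlinarith [hs0, ht1]
  · -- s < 2t : b = 0
    refine ⟨0, le_refl 0, ?_, ?_⟩
    · have hstep : ∀ y ∈ Finset.Icc 1 z, (y:ℝ) ^ (-(2*(t:ℝ))/s) ≤ (y:ℝ) ^ (-1 - 1/(s:ℝ)) := by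
        intro y hy
        simp only [Finset.mem_Icc] at hy
        have hy1 : (1:ℝ) ≤ y := by exact_mod_cast hy.1
        apply Real.rpow_le_rpow_of_exponent_le hy1
        have h21 : (s:ℝ) + 1 ≤ 2 * t := by exact_mod_cast h2t
        have e2 : (-1 : ℝ) - 1/(s:ℝ) = -((s:ℝ)+1)/s := by field_simp; ring
        rw [e2, div_le_div_iff₀ hs0 hs0]
        nlinarith [hs0]
      calc ∑ y ∈ Finset.Icc 1 z, (y:ℝ) ^ (-(2*(t:ℝ))/s)
          ≤ ∑ y ∈ Finset.Icc 1 z, (y:ℝ) ^ (-1 - 1/(s:ℝ)) := Finset.sum_le_sum hstep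
        _ ≤ 1 + 1 / (1/(s:ℝ)) := sumTail (by positivity) (by
            rw [div_le_one hs0]; linarith) z
        _ = 1 + s := by rw [one_div_one_div]
        _ ≤ ((s:ℝ)+1) * (1 + Real.log z) * (z:ℝ) ^ (0:ℝ) := by
            rw [Real.rpow_zero, mul_one]
            nlinarith [mul_nonneg (by positivity : (0:ℝ) ≤ (s:ℝ)+1) hlog]
    · have e3 : -1 + 1/(s:ℝ) + ((t:ℝ)-1)/s + 0 = ((t:ℝ) - s)/s := by
        field_simp; ring
      rw [e3, div_le_div_iff₀ hs0 hs0]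
      nlinarith [hs0, hts']

theorem stmt_5 (s : ℕ) (hs : 2 ≤ s) :
    ∃ C : ℝ, 0 < C ∧ ∀ t : ℕ, 1 ≤ t → t ≤ s - 1 → ∀ z : ℕ, 2 ≤ z →
      ∑ x ∈ (Fintype.piFinset fun _ : Fin t => Finset.Icc 1 z).filter
          (fun x : Fin t → ℕ => ∑ i, x i < z),
        (∏ i, (x i : ℝ) ^ (-1 + 1 / (s : ℝ))) *
          ((z : ℝ) - ∑ i, (x i : ℝ)) ^ (-(2 * (t : ℝ)) / s) ≤
      C * (z : ℝ) ^ (-(1 : ℝ) / s) * Real.log z := by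
  have hCpos : 0 < 2 * s^(s+1) + 3 * s^s * (s+1) := by
    have h1 : 0 < s ^ (s+1) := pow_pos (by omega) _
    calc 0 < s^(s+1) := h1
      _ ≤ 2 * s^(s+1) := by omega
      _ ≤ 2 * s^(s+1) + 3 * s^s * (s+1) := Nat.le_add_right _ _
  refine ⟨((2 * s^(s+1) + 3 * s^s * (s+1) : ℕ) : ℝ), by exact_mod_cast hCpos, ?_⟩
  intro t ht hts z hz
  have hs0 : (0:ℝ) < s := by exact_mod_cast (by omega : 0 < s)
  have hz1 : (1:ℝ) ≤ (z:ℝ) := by exact_mod_cast (by omega : 1 ≤ z)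
  have hz0 : (0:ℝ) < (z:ℝ) := by linarith
  have hlog : (1:ℝ)/2 ≤ Real.log z := by
    have h2 : Real.log 2 ≤ Real.log z :=
      Real.log_le_log (by norm_num) (by exact_mod_cast hz)
    have := Real.log_two_gt_d9
    linarith
  set A := (Fintype.piFinset fun _ : Fin t => Finset.Icc 1 z).filter
      (fun x : Fin t → ℕ => ∑ i, x i < z) with hA
  set Y : (Fin t → ℕ) → ℕ := fun x => z - ∑ i, x i with hY
  set a : ℝ := -1 + 1/(s:ℝ) with ha
  set e : ℝ := -(2*(t:ℝ))/s with he
  set f : (Fin t → ℕ) → ℝ := fun x => (∏ i, (x i : ℝ) ^ a) * (Y x : ℝ) ^ e with hf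
  -- facts about members of A
  have hmem : ∀ x ∈ A, (∀ i, 1 ≤ x i ∧ x i ≤ z) ∧ (∑ i, x i < z) := by
    intro x hx
    rw [hA, Finset.mem_filter, Fintype.mem_piFinset] at hx
    exact ⟨fun i => Finset.mem_Icc.1 (hx.1 i), hx.2⟩
  have hfnonneg : ∀ x, 0 ≤ f x := by
    intro x
    exact mul_nonneg (Finset.prod_nonneg fun i _ => Real.rpow_nonneg (Nat.cast_nonneg _) _)
      (Real.rpow_nonneg (Nat.cast_nonneg _) _)
  -- the goal's summand equals f on A
  have hgoal_eq : ∀ x ∈ A,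
      (∏ i, (x i : ℝ) ^ (-1 + 1 / (s : ℝ))) *
        ((z : ℝ) - ∑ i, (x i : ℝ)) ^ (-(2 * (t : ℝ)) / s) = f x := by
    intro x hx
    have h1 : (z:ℝ) - ∑ i, ((x i : ℕ) : ℝ) = (Y x : ℝ) := by
      have hlt := (hmem x hx).2
      rw [hY]
      push_cast [Nat.cast_sub hlt.le]
      ring
    rw [hf, ha, he, h1]
  rw [Finset.sum_congr rfl hgoal_eq]
  -- pointwise split according to the largest coordinate
  have hsplit : ∀ x ∈ A, f x ≤
      (if z ≤ (t+1) * Y x then f x else 0)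
        + ∑ j : Fin t, (if z ≤ (t+1) * x j then f x else 0) := by
    intro x hx
    have hnn : ∀ j : Fin t, (0:ℝ) ≤ if z ≤ (t+1) * x j then f x else 0 := by
      intro j; split
      · exact hfnonneg x
      · exact le_refl 0
    have hnnsum : (0:ℝ) ≤ ∑ j : Fin t, (if z ≤ (t+1) * x j then f x else 0) :=
      Finset.sum_nonneg fun j _ => hnn j
    by_cases hy : z ≤ (t+1) * Y x
    · rw [if_pos hy]; linarith
    · have hex : ∃ j, z ≤ (t+1) * x j := by
        by_contra hcon
        push_neg at hcon
        have hxy : ∑ i, x i + Y x = z := by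
          have h2 := (hmem x hx).2
          simp only [hY]; omega
        have hsum : ∑ j : Fin t, (t+1) * x j ≤ t * (z-1) := by
          calc ∑ j : Fin t, (t+1) * x j ≤ ∑ _j : Fin t, (z-1) :=
                Finset.sum_le_sum fun j _ => by have := hcon j; omega
            _ = t * (z-1) := by
                rw [Finset.sum_const, Finset.card_univ, Fintype.card_fin, smul_eq_mul]
        have hYb : (t+1) * Y x ≤ z - 1 := by omega
        have h1 : (t+1) * z ≤ (t+1) * (z-1) := by
          calc (t+1) * z = (∑ j : Fin t, (t+1) * x j) + (t+1) * Y x := by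
                rw [← Finset.mul_sum, ← Nat.mul_add, hxy]
            _ ≤ t * (z-1) + (z-1) := Nat.add_le_add hsum hYb
            _ = (t+1) * (z-1) := by ring
        have h2 := Nat.le_of_mul_le_mul_left h1 (by omega : 0 < t+1)
        omega
      obtain ⟨j, hj⟩ := hex
      have h3 : f x ≤ ∑ j' : Fin t, (if z ≤ (t+1) * x j' then f x else 0) := by
        have h4 := Finset.single_le_sum (f := fun j' : Fin t => if z ≤ (t+1) * x j' then f x else 0)
          (fun j' _ => hnn j') (Finset.mem_univ j)
        simpa only [if_pos hj] using h4
      rw [if_neg hy]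
      have h5 : (0:ℝ) ≤ if z ≤ (t+1) * Y x then f x else 0 := by
        split
        · exact hfnonneg x
        · exact le_refl 0
      linarith
  have step1 : ∑ x ∈ A, f x ≤
      (∑ x ∈ A.filter (fun x => z ≤ (t+1) * Y x), f x)
        + ∑ j : Fin t, ∑ x ∈ A.filter (fun x => z ≤ (t+1) * x j), f x := by
    calc ∑ x ∈ A, f x
        ≤ ∑ x ∈ A, ((if z ≤ (t+1) * Y x then f x else 0)
            + ∑ j : Fin t, (if z ≤ (t+1) * x j then f x else 0)) :=
          Finset.sum_le_sum hsplit
      _ = (∑ x ∈ A, if z ≤ (t+1) * Y x then f x else 0)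
            + ∑ x ∈ A, ∑ j : Fin t, (if z ≤ (t+1) * x j then f x else 0) := by
          rw [Finset.sum_add_distrib]
      _ = (∑ x ∈ A.filter (fun x => z ≤ (t+1) * Y x), f x)
            + ∑ j : Fin t, ∑ x ∈ A.filter (fun x => z ≤ (t+1) * x j), f x := by
          congr 1
          · exact (Finset.sum_filter _ _).symm
          · rw [Finset.sum_comm]
            exact Finset.sum_congr rfl fun j _ => (Finset.sum_filter _ _).symm
  -- bound on the single sums
  have hp0 : (0:ℝ) < 1/(s:ℝ) := by positivity
  have hp1 : 1/(s:ℝ) ≤ 1 := by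
    rw [div_le_one hs0]
    exact_mod_cast (by omega : 1 ≤ s)
  have hSa : ∑ v ∈ Finset.Icc 1 z, (v:ℝ)^a ≤ (s:ℝ) * (z:ℝ)^(1/(s:ℝ)) := by
    have h := sumA hp0 hp1 z
    rw [ha, show (-1 : ℝ) + 1/(s:ℝ) = 1/(s:ℝ) - 1 by ring]
    refine h.trans (le_of_eq ?_)
    rw [div_div_eq_mul_div, div_one, mul_comm]
  have hSa0 : (0:ℝ) ≤ ∑ v ∈ Finset.Icc 1 z, (v:ℝ)^a :=
    Finset.sum_nonneg fun v _ => Real.rpow_nonneg (Nat.cast_nonneg v) a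
  have ht1 : (1:ℝ) ≤ (t:ℝ) := by exact_mod_cast ht
  have he0 : e ≤ 0 := by
    rw [he]
    apply div_nonpos_of_nonpos_of_nonneg <;> [linarith; linarith]
  have ha0 : a ≤ 0 := by rw [ha]; linarith
  have hts1 : (t:ℝ) + 1 ≤ (s:ℝ) := by exact_mod_cast (by omega : t + 1 ≤ s)
  -- bound for the "Y large" part
  have hSY : ∑ x ∈ A.filter (fun x => z ≤ (t+1) * Y x), f x ≤
      (s:ℝ)^(t+2) * (z:ℝ)^(-(1:ℝ)/s) := by
    have hpt : ∀ x ∈ A.filter (fun x => z ≤ (t+1) * Y x),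
        f x ≤ ((s:ℝ)^2 * (z:ℝ)^e) * ∏ i, (x i : ℝ)^a := by
      intro x hxF
      rw [Finset.mem_filter] at hxF
      obtain ⟨hxA, hxY⟩ := hxF
      have hYcast : (z:ℝ) ≤ ((t:ℝ)+1) * (Y x : ℝ) := by exact_mod_cast hxY
      have htp : (0:ℝ) < (t:ℝ)+1 := by linarith
      have hdivle : (z:ℝ)/((t:ℝ)+1) ≤ (Y x : ℝ) := by
        rw [div_le_iff₀ htp]
        linarith [hYcast]
      have h1 : (Y x : ℝ)^e ≤ ((z:ℝ)/((t:ℝ)+1))^e :=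
        Real.rpow_le_rpow_of_nonpos (by positivity) hdivle he0
      have h2 : ((z:ℝ)/((t:ℝ)+1))^e = (z:ℝ)^e * ((t:ℝ)+1)^(-e) := by
        rw [Real.div_rpow hz0.le htp.le, Real.rpow_neg htp.le, div_eq_mul_inv]
      have h3 : ((t:ℝ)+1)^(-e) ≤ (s:ℝ)^2 := by
        calc ((t:ℝ)+1)^(-e) ≤ ((t:ℝ)+1)^((2:ℕ):ℝ) := by
              apply Real.rpow_le_rpow_of_exponent_le (by linarith)
              rw [he, neg_div, neg_neg, div_le_iff₀ hs0]
              push_cast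
              nlinarith [hs0, hts1]
          _ = ((t:ℝ)+1)^(2:ℕ) := Real.rpow_natCast _ 2
          _ ≤ (s:ℝ)^2 := by nlinarith [hts1, htp]
      have h4 : (Y x : ℝ)^e ≤ (s:ℝ)^2 * (z:ℝ)^e := by
        calc (Y x : ℝ)^e ≤ (z:ℝ)^e * ((t:ℝ)+1)^(-e) := h2 ▸ h1
          _ ≤ (z:ℝ)^e * (s:ℝ)^2 :=
              mul_le_mul_of_nonneg_left h3 (Real.rpow_nonneg hz0.le e)
          _ = (s:ℝ)^2 * (z:ℝ)^e := mul_comm _ _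
      rw [hf]
      calc (∏ i, (x i : ℝ) ^ a) * (Y x : ℝ) ^ e
          ≤ (∏ i, (x i : ℝ) ^ a) * ((s:ℝ)^2 * (z:ℝ)^e) :=
            mul_le_mul_of_nonneg_left h4
              (Finset.prod_nonneg fun i _ => Real.rpow_nonneg (Nat.cast_nonneg _) _)
        _ = ((s:ℝ)^2 * (z:ℝ)^e) * ∏ i, (x i : ℝ)^a := mul_comm _ _
    calc ∑ x ∈ A.filter (fun x => z ≤ (t+1) * Y x), f x
        ≤ ∑ x ∈ A.filter (fun x => z ≤ (t+1) * Y x), ((s:ℝ)^2 * (z:ℝ)^e) * ∏ i, (x i : ℝ)^a :=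
          Finset.sum_le_sum hpt
      _ = ((s:ℝ)^2 * (z:ℝ)^e) * ∑ x ∈ A.filter (fun x => z ≤ (t+1) * Y x), ∏ i, (x i : ℝ)^a := by
          rw [Finset.mul_sum]
      _ ≤ ((s:ℝ)^2 * (z:ℝ)^e) * ∑ x ∈ (Fintype.piFinset fun _ : Fin t => Finset.Icc 1 z),
            ∏ i, (x i : ℝ)^a := by
          apply mul_le_mul_of_nonneg_left ?_ (by positivity)
          apply Finset.sum_le_sum_of_subset_of_nonneg
          · exact (Finset.filter_subset _ A).trans (by rw [hA]; exact Finset.filter_subset _ _)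
          · exact fun q _ _ => Finset.prod_nonneg fun i _ => Real.rpow_nonneg (Nat.cast_nonneg _) _
      _ = ((s:ℝ)^2 * (z:ℝ)^e) * (∑ v ∈ Finset.Icc 1 z, (v:ℝ)^a)^t := by
          rw [Finset.sum_prod_piFinset (Finset.Icc 1 z) (fun _ v => (v:ℝ)^a),
            Finset.prod_const, Finset.card_univ, Fintype.card_fin]
      _ ≤ ((s:ℝ)^2 * (z:ℝ)^e) * ((s:ℝ) * (z:ℝ)^(1/(s:ℝ)))^t := by
          apply mul_le_mul_of_nonneg_left (pow_le_pow_left₀ hSa0 hSa t) (by positivity)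
      _ = (s:ℝ)^(t+2) * ((z:ℝ)^e * (z:ℝ)^((t:ℝ)/(s:ℝ))) := by
          rw [mul_pow, ← Real.rpow_natCast ((z:ℝ)^(1/(s:ℝ))) t, ← Real.rpow_mul hz0.le,
            show (1/(s:ℝ)) * (t:ℝ) = (t:ℝ)/(s:ℝ) by ring]
          ring
      _ = (s:ℝ)^(t+2) * (z:ℝ)^(e + (t:ℝ)/(s:ℝ)) := by rw [← Real.rpow_add hz0]
      _ ≤ (s:ℝ)^(t+2) * (z:ℝ)^(-(1:ℝ)/(s:ℝ)) := by
          apply mul_le_mul_of_nonneg_left (Real.rpow_le_rpow_of_exponent_le hz1 ?_) (by positivity)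
          rw [he, ← add_div, div_le_div_iff₀ hs0 hs0]
          nlinarith [mul_nonneg (by linarith : (0:ℝ) ≤ (t:ℝ) - 1) hs0.le]
  -- bound for the "x j large" parts
  have hSj : ∀ j : Fin t, ∑ x ∈ A.filter (fun x => z ≤ (t+1) * x j), f x ≤
      (s:ℝ)^t * ((s:ℝ)+1) * (1 + Real.log z) * (z:ℝ)^(-(1:ℝ)/s) := by
    intro j
    obtain ⟨b, hb0, hSb, hexp⟩ := sumB hs ht hts hz
    rw [← he] at hSb
    rw [← ha] at hexp
    set F := A.filter (fun x => z ≤ (t+1) * x j) with hF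
    set φ : (Fin t → ℕ) → (Fin t → ℕ) := fun x => Function.update x j (Y x) with hφ
    set g : (Fin t → ℕ) → ℝ := fun q =>
      ((s:ℝ) * (z:ℝ)^a) * ∏ i, (if i = j then (q i : ℝ)^e else (q i : ℝ)^a) with hg
    have hznn : (0:ℝ) ≤ (z:ℝ)^a := Real.rpow_nonneg hz0.le a
    have hgnn : ∀ q, 0 ≤ g q := by
      intro q
      apply mul_nonneg (by positivity)
      apply Finset.prod_nonneg
      intro i _
      split <;> exact Real.rpow_nonneg (Nat.cast_nonneg _) _
    have hfg : ∀ x ∈ F, f x ≤ g (φ x) := by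
      intro x hxF
      rw [hF, Finset.mem_filter] at hxF
      obtain ⟨hxA, hxj⟩ := hxF
      have hprod_nn : (0:ℝ) ≤ ∏ i ∈ Finset.univ.erase j, (x i : ℝ)^a :=
        Finset.prod_nonneg fun i _ => Real.rpow_nonneg (Nat.cast_nonneg _) _
      have hYnn : (0:ℝ) ≤ (Y x : ℝ)^e := Real.rpow_nonneg (Nat.cast_nonneg _) _
      have htp : (0:ℝ) < (t:ℝ)+1 := by linarith
      have hdivle : (z:ℝ)/((t:ℝ)+1) ≤ (x j : ℝ) := by
        rw [div_le_iff₀ htp]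
        have hc : (z:ℝ) ≤ ((t:ℝ)+1) * (x j : ℝ) := by exact_mod_cast hxj
        linarith
      have h1 : (x j : ℝ)^a ≤ ((z:ℝ)/((t:ℝ)+1))^a :=
        Real.rpow_le_rpow_of_nonpos (by positivity) hdivle ha0
      have h2 : ((z:ℝ)/((t:ℝ)+1))^a = (z:ℝ)^a * ((t:ℝ)+1)^(-a) := by
        rw [Real.div_rpow hz0.le htp.le, Real.rpow_neg htp.le, div_eq_mul_inv]
      have h3 : ((t:ℝ)+1)^(-a) ≤ (s:ℝ) := by
        calc ((t:ℝ)+1)^(-a) ≤ ((t:ℝ)+1)^(1:ℝ) := by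
              apply Real.rpow_le_rpow_of_exponent_le (by linarith)
              rw [ha]; linarith [hp0]
          _ = (t:ℝ)+1 := Real.rpow_one _
          _ ≤ (s:ℝ) := hts1
      have hxja : (x j : ℝ)^a ≤ (s:ℝ) * (z:ℝ)^a := by
        calc (x j : ℝ)^a ≤ (z:ℝ)^a * ((t:ℝ)+1)^(-a) := h2 ▸ h1
          _ ≤ (z:ℝ)^a * (s:ℝ) := mul_le_mul_of_nonneg_left h3 hznn
          _ = (s:ℝ) * (z:ℝ)^a := mul_comm _ _
      have hgval : g (φ x) =
          ((s:ℝ) * (z:ℝ)^a) * ((Y x : ℝ)^e * ∏ i ∈ Finset.univ.erase j, (x i : ℝ)^a) := by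
        rw [hg]
        simp only []
        congr 1
        rw [← Finset.mul_prod_erase Finset.univ _ (Finset.mem_univ j)]
        congr 1
        · rw [if_pos rfl, hφ]
          simp
        · apply Finset.prod_congr rfl
          intro i hi
          have hij := Finset.ne_of_mem_erase hi
          rw [if_neg hij, hφ]
          simp [Function.update_of_ne hij]
      have hfval : f x = (x j : ℝ)^a *
          ((∏ i ∈ Finset.univ.erase j, (x i : ℝ)^a) * (Y x : ℝ)^e) := by
        rw [hf]
        simp only []
        rw [← Finset.mul_prod_erase Finset.univ _ (Finset.mem_univ j)]
        ring
      rw [hfval, hgval]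
      calc (x j:ℝ)^a * ((∏ i ∈ Finset.univ.erase j, (x i:ℝ)^a) * (Y x:ℝ)^e)
          ≤ ((s:ℝ) * (z:ℝ)^a) * ((∏ i ∈ Finset.univ.erase j, (x i:ℝ)^a) * (Y x:ℝ)^e) :=
            mul_le_mul_of_nonneg_right hxja (mul_nonneg hprod_nn hYnn)
        _ = ((s:ℝ) * (z:ℝ)^a) * ((Y x:ℝ)^e * ∏ i ∈ Finset.univ.erase j, (x i:ℝ)^a) := by
            ring
    have hinj : ∀ x ∈ F, ∀ x' ∈ F, φ x = φ x' → x = x' := by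
      intro x hx x' hx' hEq
      have hxA : x ∈ A := Finset.mem_of_mem_filter x hx
      have hx'A : x' ∈ A := Finset.mem_of_mem_filter x' hx'
      have hYeq : Y x = Y x' := by
        have h := congrFun hEq j
        simpa [hφ] using h
      have hothers : ∀ i, i ≠ j → x i = x' i := by
        intro i hij
        have h := congrFun hEq i
        simpa [hφ, Function.update_of_ne hij] using h
      have hsums : ∑ i, x i = ∑ i, x' i := by
        have h1 := (hmem x hxA).2
        have h2 := (hmem x' hx'A).2
        simp only [hY] at hYeq
        omega
      have herase : ∑ i ∈ Finset.univ.erase j, x i = ∑ i ∈ Finset.univ.erase j, x' i :=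
        Finset.sum_congr rfl fun i hi => hothers i (Finset.ne_of_mem_erase hi)
      have hxj : x j = x' j := by
        have e1 := (Finset.add_sum_erase Finset.univ x (Finset.mem_univ j)).symm
        have e2 := (Finset.add_sum_erase Finset.univ x' (Finset.mem_univ j)).symm
        omega
      funext i
      by_cases hij : i = j
      · rw [hij]; exact hxj
      · exact hothers i hij
    have himg : ∀ x ∈ F, φ x ∈ (Fintype.piFinset fun _ : Fin t => Finset.Icc 1 z) := by
      intro x hxF
      have hxA : x ∈ A := Finset.mem_of_mem_filter x hxF
      rw [Fintype.mem_piFinset]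
      intro i
      by_cases hij : i = j
      · subst hij
        rw [hφ]
        simp only [Function.update_self]
        rw [Finset.mem_Icc]
        have h2 := (hmem x hxA).2
        simp only [hY]
        omega
      · rw [hφ]
        simp only [Function.update_of_ne hij]
        rw [Finset.mem_Icc]
        exact ⟨((hmem x hxA).1 i).1, ((hmem x hxA).1 i).2⟩
    have hchain : ∑ x ∈ F, f x ≤
        ((s:ℝ) * (z:ℝ)^a) * ((∑ v ∈ Finset.Icc 1 z, (v:ℝ)^e)
          * (∑ v ∈ Finset.Icc 1 z, (v:ℝ)^a)^(t-1)) := by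
      calc ∑ x ∈ F, f x ≤ ∑ x ∈ F, g (φ x) := Finset.sum_le_sum hfg
        _ = ∑ q ∈ F.image φ, g q := (Finset.sum_image hinj).symm
        _ ≤ ∑ q ∈ (Fintype.piFinset fun _ : Fin t => Finset.Icc 1 z), g q :=
            Finset.sum_le_sum_of_subset_of_nonneg
              (Finset.image_subset_iff.2 himg) (fun q _ _ => hgnn q)
        _ = ((s:ℝ) * (z:ℝ)^a) * ∑ q ∈ (Fintype.piFinset fun _ : Fin t => Finset.Icc 1 z),
              ∏ i, (if i = j then (q i : ℝ)^e else (q i : ℝ)^a) := by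
            rw [hg, ← Finset.mul_sum]
        _ = ((s:ℝ) * (z:ℝ)^a) * ∏ i, ∑ v ∈ Finset.Icc 1 z,
              (if i = j then (v:ℝ)^e else (v:ℝ)^a) := by
            rw [Finset.sum_prod_piFinset (Finset.Icc 1 z)
              (fun i v => if i = j then (v:ℝ)^e else (v:ℝ)^a)]
        _ = ((s:ℝ) * (z:ℝ)^a) * ((∑ v ∈ Finset.Icc 1 z, (v:ℝ)^e)
              * (∑ v ∈ Finset.Icc 1 z, (v:ℝ)^a)^(t-1)) := by
            congr 1
            have hterm : ∑ v ∈ Finset.Icc 1 z, (if j = j then (v:ℝ)^e else (v:ℝ)^a)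
                = ∑ v ∈ Finset.Icc 1 z, (v:ℝ)^e := by simp
            have hrest : ∏ i ∈ Finset.univ.erase j, (∑ v ∈ Finset.Icc 1 z,
                (if i = j then (v:ℝ)^e else (v:ℝ)^a))
                = (∑ v ∈ Finset.Icc 1 z, (v:ℝ)^a)^(t-1) := by
              rw [Finset.prod_congr rfl
                (fun i hi => by simp [Finset.ne_of_mem_erase hi] :
                  ∀ i ∈ Finset.univ.erase j, (∑ v ∈ Finset.Icc 1 z,
                    (if i = j then (v:ℝ)^e else (v:ℝ)^a))
                    = ∑ v ∈ Finset.Icc 1 z, (v:ℝ)^a),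
                Finset.prod_const, Finset.card_erase_of_mem (Finset.mem_univ j),
                Finset.card_univ, Fintype.card_fin]
            rw [← Finset.mul_prod_erase Finset.univ _ (Finset.mem_univ j), hterm, hrest]
    have hLnn : (0:ℝ) ≤ 1 + Real.log z := by linarith
    have hSbnn : (0:ℝ) ≤ ∑ v ∈ Finset.Icc 1 z, (v:ℝ)^e :=
      Finset.sum_nonneg fun v _ => Real.rpow_nonneg (Nat.cast_nonneg v) e
    have hu : t - 1 + 1 = t := by omega
    have hzb : (0:ℝ) ≤ (z:ℝ)^b := Real.rpow_nonneg hz0.le b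
    calc ∑ x ∈ F, f x
        ≤ ((s:ℝ) * (z:ℝ)^a) * ((∑ v ∈ Finset.Icc 1 z, (v:ℝ)^e)
            * (∑ v ∈ Finset.Icc 1 z, (v:ℝ)^a)^(t-1)) := hchain
      _ ≤ ((s:ℝ) * (z:ℝ)^a) * ((((s:ℝ)+1) * (1 + Real.log z) * (z:ℝ)^b)
            * ((s:ℝ) * (z:ℝ)^(1/(s:ℝ)))^(t-1)) := by
          apply mul_le_mul_of_nonneg_left ?_ (by positivity)
          exact mul_le_mul hSb (pow_le_pow_left₀ hSa0 hSa (t-1)) (pow_nonneg hSa0 _)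
            (mul_nonneg (mul_nonneg (by positivity) hLnn) hzb)
      _ = (s:ℝ)^t * ((s:ℝ)+1) * (1 + Real.log z)
            * ((z:ℝ)^a * ((z:ℝ)^(((t:ℝ)-1)/(s:ℝ)) * (z:ℝ)^b)) := by
          have hzp : ((z:ℝ)^(1/(s:ℝ)))^(t-1) = (z:ℝ)^(((t:ℝ)-1)/(s:ℝ)) := by
            rw [← Real.rpow_natCast ((z:ℝ)^(1/(s:ℝ))) (t-1), ← Real.rpow_mul hz0.le,
              Nat.cast_sub ht, Nat.cast_one]
            congr 1
            ring
          have hsp : (s:ℝ) * (s:ℝ)^(t-1) = (s:ℝ)^t := by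
            conv_rhs => rw [← hu]
            rw [pow_succ]
            ring
          rw [mul_pow, hzp, ← hsp]
          ring
      _ = (s:ℝ)^t * ((s:ℝ)+1) * (1 + Real.log z) * (z:ℝ)^(a + ((t:ℝ)-1)/(s:ℝ) + b) := by
          rw [Real.rpow_add hz0 (a + ((t:ℝ)-1)/(s:ℝ)) b,
            Real.rpow_add hz0 a (((t:ℝ)-1)/(s:ℝ)), mul_assoc ((z:ℝ)^a)]
      _ ≤ (s:ℝ)^t * ((s:ℝ)+1) * (1 + Real.log z) * (z:ℝ)^(-(1:ℝ)/(s:ℝ)) := by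
          apply mul_le_mul_of_nonneg_left (Real.rpow_le_rpow_of_exponent_le hz1 ?_)
            (by positivity)
          linarith [hexp]
  -- assemble
  have hfin : ∑ x ∈ A, f x ≤ (s:ℝ)^(t+2) * (z:ℝ)^(-(1:ℝ)/s)
      + (t:ℝ) * ((s:ℝ)^t * ((s:ℝ)+1) * (1 + Real.log z) * (z:ℝ)^(-(1:ℝ)/s)) := by
    refine step1.trans (add_le_add hSY ?_)
    calc ∑ j : Fin t, ∑ x ∈ A.filter (fun x => z ≤ (t+1) * x j), f x
        ≤ ∑ _j : Fin t, (s:ℝ)^t * ((s:ℝ)+1) * (1 + Real.log z) * (z:ℝ)^(-(1:ℝ)/s) :=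
          Finset.sum_le_sum fun j _ => hSj j
      _ = (t:ℝ) * ((s:ℝ)^t * ((s:ℝ)+1) * (1 + Real.log z) * (z:ℝ)^(-(1:ℝ)/s)) := by
          rw [Finset.sum_const, Finset.card_univ, Fintype.card_fin, nsmul_eq_mul]
  refine hfin.trans ?_
  have hR : (0:ℝ) ≤ (z:ℝ)^(-(1:ℝ)/s) := Real.rpow_nonneg hz0.le _
  have hs1 : (1:ℝ) ≤ (s:ℝ) := by exact_mod_cast (by omega : 1 ≤ s)
  have h1 : (s:ℝ)^(t+2) ≤ (s:ℝ)^(s+1) := pow_le_pow_right₀ hs1 (by omega)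
  have hn2 : t * s^t ≤ s^s := by
    calc t * s^t ≤ s * s^(s-1) :=
          Nat.mul_le_mul (by omega) (Nat.pow_le_pow_right (by omega) (by omega))
      _ = s^s := by
          rw [← pow_succ']
          congr 1
          omega
  have h2 : (t:ℝ) * (s:ℝ)^t ≤ (s:ℝ)^s := by exact_mod_cast hn2
  have hS1nn : (0:ℝ) ≤ (s:ℝ)^(s+1) := by positivity
  have hS2nn : (0:ℝ) ≤ (s:ℝ)^s * ((s:ℝ)+1) := by positivity
  have hint1 : (0:ℝ) ≤ ((s:ℝ)^(s+1) - (s:ℝ)^(t+2)) * (z:ℝ)^(-(1:ℝ)/s) :=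
    mul_nonneg (by linarith) hR
  have hint2 : (0:ℝ) ≤ ((s:ℝ)^s * ((s:ℝ)+1) - (t:ℝ) * (s:ℝ)^t * ((s:ℝ)+1))
      * ((1 + Real.log z) * (z:ℝ)^(-(1:ℝ)/s)) := by
    apply mul_nonneg ?_ (mul_nonneg (by linarith) hR)
    have : (t:ℝ) * (s:ℝ)^t * ((s:ℝ)+1) ≤ (s:ℝ)^s * ((s:ℝ)+1) :=
      mul_le_mul_of_nonneg_right h2 (by linarith)
    linarith
  have hint3 : (0:ℝ) ≤ (s:ℝ)^(s+1) * ((z:ℝ)^(-(1:ℝ)/s) * (2 * Real.log z - 1)) :=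
    mul_nonneg hS1nn (mul_nonneg hR (by linarith))
  have hint4 : (0:ℝ) ≤ ((s:ℝ)^s * ((s:ℝ)+1)) * ((z:ℝ)^(-(1:ℝ)/s) * (2 * Real.log z - 1)) :=
    mul_nonneg hS2nn (mul_nonneg hR (by linarith))
  push_cast
  nlinarith [hint1, hint2, hint3, hint4]
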